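/- arXiv:1404.2081 — 4 statements merged into one kernel-verified Lean document; each statement's English description precedes it below -/
import Mathlib

section
/- Let N and M be positive integers, let H be an N×M complex matrix such that H Hᴴ is invertible, and let Hᴿ = α H† be its normalized right pseudo-inverse, where H† = Hᴴ (H Hᴴ)⁻¹ and α⁻² = tr((H†)ᴴ H†). Then for every positive semidefinite Hermitian N×N complex matrix Q, the real number tr(Hᴿ Q (Hᴿ)ᴴ) satisfies tr(Hᴿ Q (Hᴿ)ᴴ) ≤ tr(Q); i.e., pre-coding with the normalized right pseudo-inverse does not increase the transmit power. -/
open Matrix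
open scoped ComplexOrder

private lemma frob_trace_re {m n : Type*} [Fintype m] [Fintype n]
    (A : Matrix m n ℂ) :
    ((Aᴴ * A).trace).re = ∑ j, ∑ i, ‖A i j‖ ^ 2 := by
  simp only [Matrix.trace, Matrix.diag, Matrix.mul_apply, Matrix.conjTranspose_apply]
  rw [Complex.re_sum]
  refine Finset.sum_congr rfl fun j _ => ?_
  rw [Complex.re_sum]
  refine Finset.sum_congr rfl fun i _ => ?_
  have : star (A i j) * A i j = ((‖A i j‖ ^ 2 : ℝ) : ℂ) := by
    rw [show star (A i j) = (starRingEnd ℂ) (A i j) from rfl, mul_comm,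
      Complex.mul_conj]
    simp [Complex.normSq_eq_norm_sq]
  rw [this, Complex.ofReal_re]

private lemma frob_cs {m n k : Type*} [Fintype m] [Fintype n] [Fintype k]
    (C : Matrix m k ℂ) (P : Matrix n k ℂ) :
    ∑ j, ∑ i, ‖(C * Pᴴ) i j‖ ^ 2 ≤
      (∑ j, ∑ i, ‖C i j‖ ^ 2) * (∑ j, ∑ i, ‖P i j‖ ^ 2) := by
  have key : ∀ (i : m) (j : n), ‖(C * Pᴴ) i j‖ ^ 2 ≤
      (∑ t, ‖C i t‖ ^ 2) * (∑ t, ‖P j t‖ ^ 2) := by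
    intro i j
    have h1 : ‖(C * Pᴴ) i j‖ ≤ ∑ t, ‖C i t‖ * ‖P j t‖ := by
      rw [Matrix.mul_apply]
      refine (norm_sum_le _ _).trans ?_
      refine Finset.sum_le_sum fun t _ => ?_
      rw [Matrix.conjTranspose_apply, norm_mul]
      simp
    have h2 : (∑ t, ‖C i t‖ * ‖P j t‖) ^ 2 ≤
        (∑ t, ‖C i t‖ ^ 2) * (∑ t, ‖P j t‖ ^ 2) :=
      Finset.sum_mul_sq_le_sq_mul_sq _ _ _
    calc ‖(C * Pᴴ) i j‖ ^ 2 ≤ (∑ t, ‖C i t‖ * ‖P j t‖) ^ 2 := by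
          apply pow_le_pow_left₀ (norm_nonneg _) h1
      _ ≤ _ := h2
  calc ∑ j, ∑ i, ‖(C * Pᴴ) i j‖ ^ 2
      ≤ ∑ j : n, ∑ i : m, (∑ t, ‖C i t‖ ^ 2) * (∑ t, ‖P j t‖ ^ 2) :=
        Finset.sum_le_sum fun j _ => Finset.sum_le_sum fun i _ => key i j
    _ = (∑ i : m, ∑ t : k, ‖C i t‖ ^ 2) * (∑ j : n, ∑ t : k, ‖P j t‖ ^ 2) := by
        simp_rw [← Finset.sum_mul]
        rw [← Finset.mul_sum, mul_comm]
    _ = _ := by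
        congr 1 <;> rw [Finset.sum_comm]

/-- Pre-coding with the normalized right pseudo-inverse `Hᴿ = α H†` does not increase
the transmit power: for every positive semidefinite Hermitian `N × N` matrix `Q`,
`tr(Hᴿ Q (Hᴿ)ᴴ) ≤ tr(Q)` (an inequality of real parts of the traces). -/
theorem normalized_right_pseudoinverse_power (N M : ℕ) (hN : 0 < N) (hM : 0 < M)
    (H : Matrix (Fin N) (Fin M) ℂ) (hinv : IsUnit (H * Hᴴ))
    (α : ℝ) (hα : 0 < α)
    (hαdef : ((α : ℂ))⁻¹ ^ 2 = ((Hᴴ * (H * Hᴴ)⁻¹)ᴴ * (Hᴴ * (H * Hᴴ)⁻¹)).trace)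
    (Q : Matrix (Fin N) (Fin N) ℂ) (hQ : Q.PosSemidef) :
    ((((α : ℂ) • (Hᴴ * (H * Hᴴ)⁻¹)) * Q * ((α : ℂ) • (Hᴴ * (H * Hᴴ)⁻¹))ᴴ).trace).re
      ≤ (Q.trace).re := by
  set P : Matrix (Fin M) (Fin N) ℂ := Hᴴ * (H * Hᴴ)⁻¹ with hP
  clear_value P
  obtain ⟨C, hC⟩ : ∃ C : Matrix (Fin N) (Fin N) ℂ, Q = Cᴴ * C := by
    open scoped MatrixOrder in exact CStarAlgebra.nonneg_iff_eq_star_mul_self.mp hQ.nonneg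
  have hsmul : (((α : ℂ) • P) * Q * ((α : ℂ) • P)ᴴ)
      = ((α ^ 2 : ℝ) : ℂ) • (P * Q * Pᴴ) := by
    rw [Matrix.conjTranspose_smul, Matrix.smul_mul, Matrix.mul_smul, Matrix.smul_mul, smul_smul]
    congr 1
    rw [Complex.star_def, Complex.conj_ofReal]
    push_cast
    ring
  have hrearr : P * Q * Pᴴ = (C * Pᴴ)ᴴ * (C * Pᴴ) := by
    rw [hC, Matrix.conjTranspose_mul C Pᴴ, Matrix.conjTranspose_conjTranspose]
    simp only [Matrix.mul_assoc]
  have hFP : ∑ j, ∑ i, ‖P i j‖ ^ 2 = (α ^ 2)⁻¹ := by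
    have h1 := congrArg Complex.re hαdef
    rw [frob_trace_re] at h1
    rw [← h1, ← Complex.ofReal_inv, ← Complex.ofReal_pow, Complex.ofReal_re, inv_pow]
  have hlhs : ((((α : ℂ) • P) * Q * ((α : ℂ) • P)ᴴ).trace).re
      = α ^ 2 * ∑ j, ∑ i, ‖(C * Pᴴ) i j‖ ^ 2 := by
    rw [hsmul, hrearr, Matrix.trace_smul, smul_eq_mul, ← frob_trace_re]
    simp [Complex.mul_re, ← Complex.ofReal_pow, Matrix.mul_assoc]
  have hrhs : (Q.trace).re = ∑ j, ∑ i, ‖C i j‖ ^ 2 := by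
    rw [hC, frob_trace_re]
  rw [hlhs, hrhs]
  have hcs := frob_cs C P
  rw [hFP] at hcs
  have hα2 : (0:ℝ) < α ^ 2 := by positivity
  calc α ^ 2 * ∑ j, ∑ i, ‖(C * Pᴴ) i j‖ ^ 2
      ≤ α ^ 2 * ((∑ j, ∑ i, ‖C i j‖ ^ 2) * (α ^ 2)⁻¹) :=
        mul_le_mul_of_nonneg_left hcs hα2.le
    _ = ∑ j, ∑ i, ‖C i j‖ ^ 2 := by field_simp
end

section
/- (Sum-DoF outer bound) Let K ≥ 2 be an integer and N ≥ 0 a real number. If d lies in the DoF region 𝒟_K, then the total sum satisfies Σ_{j≠k} d(j,k) ≤ 2N. -/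
/-- The DoF region `𝒟_K`: nonnegative families `d` (indexed by ordered pairs of
distinct indices in `{1,…,K}`) such that for every permutation `p` of `{1,…,K}`,
`Σ_{1≤j<k≤K} d(p_j, p_k) ≤ N`. -/
def DoFRegion (K : ℕ) (N : ℝ) : Set (Fin K → Fin K → ℝ) :=
  {d | (∀ j k : Fin K, j ≠ k → 0 ≤ d j k) ∧
    ∀ p : Equiv.Perm (Fin K),
      ∑ j : Fin K, ∑ k ∈ Finset.univ.filter (fun k => j < k), d (p j) (p k) ≤ N}

/-- Sum-DoF outer bound: every point `d` of the DoF region `𝒟_K` satisfies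
`Σ_{j≠k} d(j,k) ≤ 2N`. -/
theorem sum_dof_outer_bound (K : ℕ) (hK : 2 ≤ K) (N : ℝ) (hN : 0 ≤ N)
    (d : Fin K → Fin K → ℝ) (hd : d ∈ DoFRegion K N) :
    ∑ j : Fin K, ∑ k ∈ Finset.univ.filter (fun k => k ≠ j), d j k ≤ 2 * N := by
  obtain ⟨-, hperm⟩ := hd
  have h1 : ∑ j : Fin K, ∑ k ∈ Finset.univ.filter (fun k => j < k), d j k ≤ N := by
    simpa using hperm 1
  have h2' := hperm (Fin.revPerm)
  have h2 : ∑ j : Fin K, ∑ k ∈ Finset.univ.filter (fun k => k < j), d j k ≤ N := by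
    have heq : ∑ j : Fin K, ∑ k ∈ Finset.univ.filter (fun k => k < j), d j k
        = ∑ j : Fin K, ∑ k ∈ Finset.univ.filter (fun k => j < k),
            d (Fin.revPerm j) (Fin.revPerm k) := by
      rw [← Equiv.sum_comp Fin.revPerm
        (fun j => ∑ k ∈ Finset.univ.filter (fun k => k < j), d j k)]
      refine Finset.sum_congr rfl fun j _ => ?_
      refine Finset.sum_nbij' (i := Fin.rev) (j := Fin.rev) ?_ ?_ ?_ ?_ ?_ <;>
        simp [Fin.rev_lt_rev]
      intro a h
      rwa [← Fin.rev_lt_rev, Fin.rev_rev] at h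
    rw [heq]; exact h2'
  have hsplit : ∑ j : Fin K, ∑ k ∈ Finset.univ.filter (fun k => k ≠ j), d j k
      = (∑ j : Fin K, ∑ k ∈ Finset.univ.filter (fun k => j < k), d j k)
      + (∑ j : Fin K, ∑ k ∈ Finset.univ.filter (fun k => k < j), d j k) := by
    rw [← Finset.sum_add_distrib]
    refine Finset.sum_congr rfl fun j _ => ?_
    have hu : Finset.univ.filter (fun k : Fin K => k ≠ j)
        = (Finset.univ.filter (fun k => j < k)) ∪ (Finset.univ.filter (fun k => k < j)) := by
      ext k
      simp only [Finset.mem_filter, Finset.mem_union, Finset.mem_univ, true_and]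
      exact ⟨fun h => (h.lt_or_gt).symm, fun h => h.elim (fun h => h.ne') (fun h => h.ne)⟩
    rw [hu, Finset.sum_union]
    intro s hs1 hs2 k hk
    have h1k := hs1 hk
    have h2k := hs2 hk
    simp only [Finset.mem_filter] at h1k h2k
    exact absurd (lt_trans h1k.2 h2k.2) (lt_irrefl _)
  rw [hsplit, two_mul]
  exact add_le_add h1 h2
end

section
/- (Sum-DoF is exactly 2N) Let K ≥ 2 be an integer and N ≥ 0 a real number. The symmetric point d* defined by d*(j,k) = 2N/(K(K−1)) for all ordered pairs (j,k) of distinct indices lies in the DoF region 𝒟_K, and its total sum is Σ_{j≠k} d*(j,k) = 2N. Consequently, the maximum of Σ_{j≠k} d(j,k) over d ∈ 𝒟_K equals 2N. -/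
open Finset

def Plt (K : ℕ) : Finset (Fin K × Fin K) := univ.filter (fun x => x.1 < x.2)
def Pgt (K : ℕ) : Finset (Fin K × Fin K) := univ.filter (fun x => x.2 < x.1)

lemma sumA {K : ℕ} (f : Fin K → Fin K → ℝ) :
    ∑ j : Fin K, ∑ k ∈ univ.filter (fun k => j < k), f j k = ∑ x ∈ Plt K, f x.1 x.2 := by
  rw [Plt, Finset.sum_filter, Fintype.sum_prod_type]
  simp [Finset.sum_filter]

lemma sumNe {K : ℕ} (f : Fin K → Fin K → ℝ) :
    ∑ j : Fin K, ∑ k ∈ univ.filter (fun k => k ≠ j), f j k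
      = ∑ x ∈ Plt K, f x.1 x.2 + ∑ x ∈ Pgt K, f x.1 x.2 := by
  rw [Plt, Pgt, Finset.sum_filter, Finset.sum_filter, ← Finset.sum_add_distrib,
    Fintype.sum_prod_type]
  refine Finset.sum_congr rfl fun j _ => ?_
  rw [Finset.sum_filter]
  refine Finset.sum_congr rfl fun k _ => ?_
  rcases lt_trichotomy j k with h | h | h
  · simp [h, h.ne', not_lt_of_gt h]
  · simp [h]
  · simp [h, h.ne, not_lt_of_gt h]

lemma sumGt {K : ℕ} (f : Fin K → Fin K → ℝ) :
    ∑ x ∈ Pgt K, f x.1 x.2 = ∑ x ∈ Plt K, f x.2 x.1 := by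
  refine Finset.sum_nbij' (fun x => Prod.swap x) (fun x => Prod.swap x) ?_ ?_ ?_ ?_ ?_ <;>
    simp [Plt, Pgt]

lemma sumRev {K : ℕ} (f : Fin K → Fin K → ℝ) :
    ∑ x ∈ Plt K, f x.1.rev x.2.rev = ∑ x ∈ Plt K, f x.2 x.1 := by
  refine Finset.sum_nbij' (fun x => (x.2.rev, x.1.rev)) (fun x => (x.2.rev, x.1.rev))
    ?_ ?_ ?_ ?_ ?_ <;> simp [Plt, Fin.rev_lt_rev]

lemma cardPlt {K : ℕ} : 2 * (Plt K).card = K * K - K := by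
  have h1 : (Plt K).card = (Pgt K).card := by
    refine Finset.card_nbij' (fun x => Prod.swap x) (fun x => Prod.swap x) ?_ ?_ ?_ ?_ <;>
      simp [Plt, Pgt, Set.MapsTo, Set.LeftInvOn, Set.RightInvOn]
  have h2 : Disjoint (Plt K) (Pgt K) := by
    rw [Plt, Pgt, Finset.disjoint_filter]
    intro x _ h; exact not_lt_of_gt h
  have h3 : (Plt K) ∪ (Pgt K) = Finset.univ.offDiag := by
    ext x
    simp only [Plt, Pgt, Finset.mem_union, Finset.mem_filter, Finset.mem_offDiag]
    constructor
    · rintro (⟨_, h⟩ | ⟨_, h⟩) <;> simp [h.ne, h.ne']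
    · rintro ⟨_, _, h⟩
      rcases lt_or_gt_of_ne h with h | h <;> simp [h]
  have := Finset.card_union_of_disjoint h2
  rw [h3] at this
  rw [Finset.offDiag_card] at this
  simp at this
  omega


/-- Sum-DoF is exactly `2N`: the symmetric point `d* ≡ 2N/(K(K−1))` lies in `𝒟_K`,
its total sum is `2N`, and `2N` is the maximum of the total sum over `𝒟_K`. -/
theorem sum_dof_exactly_two_N (K : ℕ) (hK : 2 ≤ K) (N : ℝ) (hN : 0 ≤ N) :
    (fun _ _ : Fin K => 2 * N / ((K : ℝ) * ((K : ℝ) - 1))) ∈ DoFRegion K N ∧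
    (∑ j : Fin K, ∑ k ∈ Finset.univ.filter (fun k => k ≠ j),
      2 * N / ((K : ℝ) * ((K : ℝ) - 1))) = 2 * N ∧
    IsGreatest
      ((fun d : Fin K → Fin K → ℝ =>
          ∑ j : Fin K, ∑ k ∈ Finset.univ.filter (fun k => k ≠ j), d j k) ''
        DoFRegion K N)
      (2 * N) := by
  have hK2 : (2:ℝ) ≤ (K:ℝ) := by exact_mod_cast hK
  have hKpos : (0:ℝ) < (K:ℝ) * ((K:ℝ) - 1) := by nlinarith
  set c : ℝ := 2 * N / ((K : ℝ) * ((K : ℝ) - 1)) with hc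
  have hcard : (2:ℝ) * ((Plt K).card : ℝ) = (K:ℝ) * ((K:ℝ) - 1) := by
    have h := cardPlt (K := K)
    have hle : K ≤ K * K := Nat.le_mul_of_pos_left K (by omega)
    have : ((2 * (Plt K).card : ℕ) : ℝ) = ((K * K - K : ℕ) : ℝ) := by rw [h]
    push_cast [Nat.cast_sub hle] at this
    linarith
  have hval : ((Plt K).card : ℝ) * c = N := by
    rw [hc]
    rw [div_eq_iff hKpos.ne'] at *
    calc ((Plt K).card : ℝ) * (2 * N / ((K:ℝ) * ((K:ℝ) - 1)))
        = (2 * ((Plt K).card : ℝ)) * N / ((K:ℝ) * ((K:ℝ) - 1)) := by ring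
      _ = ((K:ℝ) * ((K:ℝ) - 1)) * N / ((K:ℝ) * ((K:ℝ) - 1)) := by rw [hcard]
      _ = N := by exact mul_div_cancel_left₀ N hKpos.ne'
  have hmem : (fun _ _ : Fin K => c) ∈ DoFRegion K N := by
    refine ⟨fun j k _ => div_nonneg (by linarith) hKpos.le, fun p => ?_⟩
    rw [sumA (fun j k => c), Finset.sum_const, nsmul_eq_mul, hval]
  have htot : (∑ j : Fin K, ∑ k ∈ Finset.univ.filter (fun k => k ≠ j), c) = 2 * N := by
    rw [sumNe (fun _ _ => c), sumGt (fun _ _ => c), Finset.sum_const, nsmul_eq_mul, hval]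
    linarith
  refine ⟨hmem, htot, ⟨⟨fun _ _ => c, hmem, htot⟩, ?_⟩⟩
  rintro y ⟨d, ⟨hd0, hdp⟩, rfl⟩
  simp only
  rw [sumNe d, sumGt d]
  have h1 := hdp (Equiv.refl _)
  simp only [Equiv.refl_apply] at h1
  rw [sumA d] at h1
  have h2 := hdp Fin.revPerm
  simp only [Fin.revPerm_apply] at h2
  rw [sumA (fun j k => d j.rev k.rev)] at h2
  rw [sumRev d] at h2
  linarith
end

section
/- (Rational extreme points of rational polyhedra) Let m and n be positive integers, let A be an m×n matrix with rational entries, and let b ∈ ℚ^m. Consider the polyhedron S = {x ∈ ℝⁿ : Σ_{j=1}^n A_{ij} x_j ≤ b_i for all i = 1,…,m}. Then every extreme point of S has all coordinates rational, i.e., if x is an extreme point of S then x_j ∈ ℚ for all j. -/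
open Classical in
/-- Rational extreme points of rational polyhedra: every extreme point of the solution
set of a finite system of linear inequalities with rational coefficients has rational
coordinates. -/
theorem extreme_points_rational_polyhedron (m n : ℕ) (hm : 0 < m) (hn : 0 < n)
    (A : Matrix (Fin m) (Fin n) ℚ) (b : Fin m → ℚ)
    (x : Fin n → ℝ)
    (hx : x ∈ Set.extremePoints ℝ
      {y : Fin n → ℝ | ∀ i : Fin m, ∑ j : Fin n, (A i j : ℝ) * y j ≤ (b i : ℝ)}) :
    ∀ j : Fin n, ∃ q : ℚ, x j = (q : ℝ) := by
  classical
  set S : Set (Fin n → ℝ) :=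
    {y : Fin n → ℝ | ∀ i : Fin m, ∑ j : Fin n, (A i j : ℝ) * y j ≤ (b i : ℝ)} with hS
  have hxS : x ∈ S := hx.1
  set P : Fin m → Prop := fun i => ∑ j : Fin n, (A i j : ℝ) * x j = (b i : ℝ) with hP
  -- Step 1 : any real vector orthogonal to all tight rows is zero
  have hker : ∀ v : Fin n → ℝ,
      (∀ i : Fin m, P i → ∑ j : Fin n, (A i j : ℝ) * v j = 0) → v = 0 := by
    intro v hv
    set f : Fin m → ℝ := fun i =>
      if P i then 1
      else ((b i : ℝ) - ∑ j : Fin n, (A i j : ℝ) * x j) /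
        (|∑ j : Fin n, (A i j : ℝ) * v j| + 1) with hf
    have hne : (Finset.univ : Finset (Fin m)).Nonempty := ⟨⟨0, hm⟩, Finset.mem_univ _⟩
    set ε : ℝ := Finset.univ.inf' hne f with hε
    have hfpos : ∀ i : Fin m, 0 < f i := by
      intro i
      by_cases h : P i
      · simp only [hf, if_pos h]
        norm_num
      · have hlt : ∑ j : Fin n, (A i j : ℝ) * x j < (b i : ℝ) := lt_of_le_of_ne (hxS i) h
        simp only [hf, h, if_false]
        apply div_pos (by linarith) (by positivity)
    have hεpos : 0 < ε := by
      rw [hε, Finset.lt_inf'_iff]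
      intro i _
      exact hfpos i
    have hεle : ∀ i : Fin m, ε ≤ f i := fun i => Finset.inf'_le _ (Finset.mem_univ i)
    -- any perturbation x + s • v with |s| ≤ ε stays in S
    have hmem : ∀ s : ℝ, |s| ≤ ε → x + s • v ∈ S := by
      intro s hs i
      have expand : ∑ j : Fin n, (A i j : ℝ) * (x + s • v) j =
          (∑ j : Fin n, (A i j : ℝ) * x j) + s * ∑ j : Fin n, (A i j : ℝ) * v j := by
        rw [Finset.mul_sum, ← Finset.sum_add_distrib]
        apply Finset.sum_congr rfl
        intro j _
        simp only [Pi.add_apply, Pi.smul_apply, smul_eq_mul]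
        ring
      rw [expand]
      by_cases h : P i
      · rw [hv i h, h]
        simp
      · have hlt : ∑ j : Fin n, (A i j : ℝ) * x j < (b i : ℝ) := lt_of_le_of_ne (hxS i) h
        set D : ℝ := |∑ j : Fin n, (A i j : ℝ) * v j| with hD
        have hDnn : 0 ≤ D := abs_nonneg _
        have hfi : f i = ((b i : ℝ) - ∑ j : Fin n, (A i j : ℝ) * x j) / (D + 1) := by
          simp [hf, h, hD]
        have h1 : ε * (D + 1) ≤ (b i : ℝ) - ∑ j : Fin n, (A i j : ℝ) * x j := by
          have := hεle i
          rw [hfi] at this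
          exact (le_div_iff₀ (by positivity)).mp this
        have h2 : s * ∑ j : Fin n, (A i j : ℝ) * v j ≤ ε * D := by
          calc s * ∑ j : Fin n, (A i j : ℝ) * v j ≤ |s * ∑ j : Fin n, (A i j : ℝ) * v j| :=
                le_abs_self _
            _ = |s| * D := by rw [abs_mul]
            _ ≤ ε * D := mul_le_mul_of_nonneg_right hs hDnn
        nlinarith [hεpos]
    have hmem1 : x + ε • v ∈ S := hmem ε (by rw [abs_of_pos hεpos])
    have hmem2 : x + (-ε) • v ∈ S := hmem (-ε) (by rw [abs_neg, abs_of_pos hεpos])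
    have hseg : x ∈ openSegment ℝ (x + ε • v) (x + (-ε) • v) := by
      refine ⟨1/2, 1/2, by norm_num, by norm_num, by norm_num, ?_⟩
      module
    have := hx.2 hmem1 hmem2 hseg
    have hεv : ε • v = 0 := by
      have h := this
      rwa [add_eq_left] at h
    exact (smul_eq_zero.mp hεv).resolve_left (ne_of_gt hεpos)
  -- Step 2 : the rational matrix of tight rows
  set A' : Matrix {i : Fin m // P i} (Fin n) ℚ := fun i j => A i.1 j with hA'
  have hinj : LinearMap.ker (Matrix.toLin' A') = ⊥ := by
    rw [LinearMap.ker_eq_bot']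
    intro q hq
    have hv : (fun j => (q j : ℝ)) = 0 := by
      apply hker
      intro i hi
      have : (Matrix.toLin' A') q ⟨i, hi⟩ = 0 := by rw [hq]; rfl
      rw [Matrix.toLin'_apply] at this
      have : ((A'.mulVec q ⟨i, hi⟩ : ℚ) : ℝ) = 0 := by rw [this]; norm_num
      rw [Matrix.mulVec, dotProduct] at this
      push_cast at this
      convert this using 2
    funext j
    have := congrFun hv j
    simpa using this
  obtain ⟨g, hg⟩ := LinearMap.exists_leftInverse_of_injective (Matrix.toLin' A') hinj
  set B : Matrix (Fin n) {i : Fin m // P i} ℚ := LinearMap.toMatrix' g with hB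
  have hBA : B * A' = 1 := by
    rw [hB, ← LinearMap.toMatrix'_toLin' A', ← LinearMap.toMatrix'_comp, hg,
      LinearMap.toMatrix'_id]
  -- Step 3 : cast to ℝ and recover x
  set c : ℚ →+* ℝ := algebraMap ℚ ℝ with hc
  have hBAR : (B.map c) * (A'.map c) = (1 : Matrix (Fin n) (Fin n) ℝ) := by
    rw [← Matrix.map_mul, hBA]
    simp
  have hAx : (A'.map c).mulVec x = fun i => (b i.1 : ℝ) := by
    funext i
    rw [Matrix.mulVec, dotProduct]
    have hti : ∑ j : Fin n, (A i.1 j : ℝ) * x j = (b i.1 : ℝ) := i.2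
    simpa [Matrix.map_apply, Matrix.map, Matrix.of_apply, hA', hc] using hti
  have hxeq : x = (B.map c).mulVec (fun i => (b i.1 : ℝ)) := by
    rw [← hAx, Matrix.mulVec_mulVec, hBAR]
    simp
  intro j
  refine ⟨∑ i : {i : Fin m // P i}, B j i * b i.1, ?_⟩
  have := congrFun hxeq j
  rw [this, Matrix.mulVec, dotProduct]
  push_cast
  simp [Matrix.map_apply, hc]
end
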